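/- (Modified Hoeffding-Azuma inequality) Let {X_i} be random variables with support [0,h], μ_i = E[X_i], lim μ_i = μ, and suppose P{E[X_i | X_1,…,X_{i-1}] ≠ μ} ≤ c_p·exp(−c_e·i) for constants c_p > 0 and 0 < c_e ≤ 1. Then for all 0 < δ ≤ h/2 and every t, P{Σ_{i=1}^t X_i ≥ μt + tδ} ≤ (1 + 2c_p h²/(δ²c_e²))·exp(−3δ²c_e t/(2h²)), and the same bound holds for P{Σ_{i=1}^t X_i ≤ μt − tδ}. -/

import Mathlib

open MeasureTheory Real Filter


lemma hoeffding_core {p : ℝ} (hp0 : 0 ≤ p) (hp1 : p ≤ 1) (u : ℝ) :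
    (1 - p) + p * exp u ≤ exp (p * u + u ^ 2 / 8) := by
  rcases eq_or_lt_of_le hp0 with h0 | h0
  · simp only [← h0, sub_zero, zero_mul, add_zero, zero_add, mul_zero, one_mul, zero_add]
    rw [← exp_zero]
    exact exp_le_exp.2 (by positivity)
  · rcases eq_or_lt_of_le hp1 with h1 | h1
    · subst h1
      simp only [sub_self, zero_add, one_mul]
      exact exp_le_exp.2 (by nlinarith [sq_nonneg u])
    · -- 0 < p < 1
      set D : ℝ → ℝ := fun u => (1 - p) + p * exp u with hD
      have hDpos : ∀ u, 0 < D u := fun u => by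
        have := exp_pos u; simp only [hD]; nlinarith
      set f : ℝ → ℝ := fun u => p * u + u ^ 2 / 8 - Real.log (D u) with hf
      set f' : ℝ → ℝ := fun u => p + u / 4 - p * exp u / D u with hf'
      have hD' : ∀ u, HasDerivAt D (p * exp u) u := fun u => by
        exact ((Real.hasDerivAt_exp u).const_mul p).const_add (1 - p)
      have hderiv : ∀ u, HasDerivAt f (f' u) u := by
        intro u
        have h1 : HasDerivAt (fun u : ℝ => p * u + u ^ 2 / 8)
            (p + u / 4) u := by
          have := ((hasDerivAt_id u).const_mul p).add
            (((hasDerivAt_pow 2 u)).div_const 8)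
          exact this.congr_deriv (by rw [show (2:ℕ) - 1 = 1 from rfl, pow_one]; push_cast; ring)
        have h2 : HasDerivAt (fun u => Real.log (D u)) (p * exp u / D u) u :=
          (hD' u).log (hDpos u).ne'
        exact h1.sub h2
      have hderiv2 : ∀ u, HasDerivAt f'
          (1 / 4 - (p * exp u * D u - p * exp u * (p * exp u)) / (D u) ^ 2) u := by
        intro u
        have h1 : HasDerivAt (fun u : ℝ => p + u / 4) (1 / 4) u := by
          simpa using ((hasDerivAt_id u).div_const 4).const_add p
        have h2 : HasDerivAt (fun u => p * exp u / D u)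
            ((p * exp u * D u - p * exp u * (p * exp u)) / (D u) ^ 2) u :=
          ((Real.hasDerivAt_exp u).const_mul p).div (hD' u) (hDpos u).ne'
        exact h1.sub h2
      have hsec : ∀ u, 0 ≤ 1 / 4 -
          (p * exp u * D u - p * exp u * (p * exp u)) / (D u) ^ 2 := by
        intro u
        rw [sub_nonneg, div_le_iff₀ (pow_pos (hDpos u) 2)]
        have hDu : D u = (1 - p) + p * exp u := rfl
        nlinarith [sq_nonneg ((1 - p) - p * exp u), exp_pos u, hDpos u]
      have hdiff' : Differentiable ℝ f' := fun u => (hderiv2 u).differentiableAt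
      have hf'mono : Monotone f' := by
        refine monotone_of_deriv_nonneg hdiff' ?_
        intro u; rw [(hderiv2 u).deriv]; exact hsec u
      have hf'0 : f' 0 = 0 := by
        simp only [hf', hD]
        rw [exp_zero]
        field_simp
        ring
      have hdiff : Differentiable ℝ f := fun u => (hderiv u).differentiableAt
      have hf0 : f 0 = 0 := by
        simp only [hf, hD]
        rw [exp_zero]
        norm_num
      have key : 0 ≤ f u := by
        rcases le_total 0 u with hu | hu
        · have hmono : MonotoneOn f (Set.Ici 0) := by
            refine monotoneOn_of_deriv_nonneg (convex_Ici 0) hdiff.continuous.continuousOn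
              (fun x _ => (hdiff x).differentiableWithinAt) ?_
            intro x hx
            rw [(hderiv x).deriv]
            rw [interior_Ici] at hx
            have := hf'mono (le_of_lt hx)
            rw [hf'0] at this
            exact this
          have := hmono (Set.self_mem_Ici) (Set.mem_Ici.2 hu) hu
          rwa [hf0] at this
        · have hanti : AntitoneOn f (Set.Iic 0) := by
            refine antitoneOn_of_deriv_nonpos (convex_Iic 0) hdiff.continuous.continuousOn
              (fun x _ => (hdiff x).differentiableWithinAt) ?_
            intro x hx
            rw [(hderiv x).deriv]
            rw [interior_Iic] at hx
            have := hf'mono (le_of_lt hx)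
            rw [hf'0] at this
            exact this
          have := hanti (Set.mem_Iic.2 hu) Set.self_mem_Iic hu
          rwa [hf0] at this
      have hlog : Real.log (D u) ≤ p * u + u ^ 2 / 8 := by
        simp only [hf] at key; linarith
      calc D u = exp (Real.log (D u)) := (exp_log (hDpos u)).symm
        _ ≤ exp (p * u + u ^ 2 / 8) := exp_le_exp.2 hlog

lemma geom_tail {q : ℝ} (hq : 0 < q) (t : ℕ) :
    ∑ i ∈ Finset.Icc 1 t, Real.exp (-q * i) ≤ 1 / q := by
  have hr : Real.exp (-q) < 1 := by
    rw [exp_lt_one_iff]; linarith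
  have hrpos : 0 < Real.exp (-q) := exp_pos _
  have key : ∀ t : ℕ, (∑ i ∈ Finset.Icc 1 t, Real.exp (-q * i)) * (Real.exp q - 1)
      = 1 - Real.exp (-q) ^ t := by
    intro t
    induction t with
    | zero => simp
    | succ n ih =>
      rw [Finset.sum_Icc_succ_top (Nat.one_le_iff_ne_zero.2 (Nat.succ_ne_zero n)), add_mul, ih]
      have h1 : Real.exp (-q * (n+1 : ℕ)) = Real.exp (-q) ^ (n+1) := by
        rw [← Real.exp_nat_mul]; ring_nf
      have h2 : Real.exp (-q) * Real.exp q = 1 := by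
        rw [← Real.exp_add]; simp
      rw [h1, pow_succ]
      linear_combination (Real.exp (-q)) ^ n * h2
  have hq1 : q ≤ Real.exp q - 1 := by linarith [Real.add_one_le_exp q]
  have hsum_nonneg : 0 ≤ ∑ i ∈ Finset.Icc 1 t, Real.exp (-q * i) :=
    Finset.sum_nonneg fun i _ => (exp_pos _).le
  have h3 : (∑ i ∈ Finset.Icc 1 t, Real.exp (-q * i)) * q ≤ 1 := by
    calc (∑ i ∈ Finset.Icc 1 t, Real.exp (-q * i)) * q
        ≤ (∑ i ∈ Finset.Icc 1 t, Real.exp (-q * i)) * (Real.exp q - 1) := by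
          exact mul_le_mul_of_nonneg_left hq1 hsum_nonneg
      _ = 1 - Real.exp (-q) ^ t := key t
      _ ≤ 1 := by nlinarith [pow_pos hrpos t]
  rw [le_div_iff₀ hq]; exact h3

lemma integrable_of_ae_bound {Ω : Type*} [m0 : MeasurableSpace Ω] {μ : Measure Ω}
    [IsFiniteMeasure μ] {f : Ω → ℝ} (hf : AEStronglyMeasurable f μ) {C : ℝ}
    (hb : ∀ᵐ ω ∂μ, |f ω| ≤ C) : Integrable f μ :=
  Integrable.mono' (integrable_const C) hf (by filter_upwards [hb] with ω h using h)

lemma mha_arith1 {h δ c_e μ0 t : ℝ} (hh : 0 < h) (hδ : 0 < δ) (hδh : δ ≤ h / 2)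
    (hce : 0 < c_e) (hce1 : c_e ≤ 1) (ht : 0 ≤ t) (hμ00 : 0 ≤ μ0) :
    -(2*δ*c_e/h^2) * (μ0*t + t*δ) + t * ((2*δ*c_e/h^2)*μ0 + (2*δ*c_e/h^2)^2*h^2/8)
      ≤ -(3*δ^2*c_e*t)/(2*h^2) := by
  have h2 : (0:ℝ) < 2*h^2 := by positivity
  rw [← mul_le_mul_iff_of_pos_right h2]
  have e1 : (-(2*δ*c_e/h^2) * (μ0*t + t*δ)
      + t * ((2*δ*c_e/h^2)*μ0 + (2*δ*c_e/h^2)^2*h^2/8)) * (2*h^2)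
      = t*δ^2*c_e*(c_e - 4) := by field_simp; ring
  have e2 : (-(3*δ^2*c_e*t)/(2*h^2)) * (2*h^2) = -(3*δ^2*c_e*t) := by field_simp
  rw [e1, e2]
  have H1 : 0 ≤ t*δ^2*(c_e*(1-c_e)) :=
    mul_nonneg (mul_nonneg ht (sq_nonneg δ)) (mul_nonneg hce.le (by linarith))
  nlinarith [H1]

lemma mha_arith2 {h δ c_e μ0 t i : ℝ} (hh : 0 < h) (hδ : 0 < δ) (hδh : δ ≤ h / 2)
    (hce : 0 < c_e) (hce1 : c_e ≤ 1) (ht : 0 ≤ t) (hμ00 : 0 ≤ μ0) (hμ0h : μ0 ≤ h)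
    (hit : i ≤ t) (hi : 0 ≤ i) :
    -(2*δ*c_e/h^2) * (μ0*t + t*δ) + ((t - i) * ((2*δ*c_e/h^2)*μ0 + (2*δ*c_e/h^2)^2*h^2/8)
        + ((2*δ*c_e/h^2) * (i*h) + -c_e*i))
      ≤ -(3*δ^2*c_e*t)/(2*h^2) + -(δ^2*c_e^2/(2*h^2)) * i := by
  have h2 : (0:ℝ) < 2*h^2 := by positivity
  rw [← mul_le_mul_iff_of_pos_right h2]
  have e1 : (-(2*δ*c_e/h^2) * (μ0*t + t*δ) + ((t - i) * ((2*δ*c_e/h^2)*μ0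
      + (2*δ*c_e/h^2)^2*h^2/8) + ((2*δ*c_e/h^2) * (i*h) + -c_e*i))) * (2*h^2)
      = -4*δ*c_e*μ0*i - 4*δ^2*c_e*t + t*δ^2*c_e^2 - i*δ^2*c_e^2 + 4*δ*c_e*i*h
        - 2*c_e*i*h^2 := by field_simp; ring
  have e2 : (-(3*δ^2*c_e*t)/(2*h^2) + -(δ^2*c_e^2/(2*h^2)) * i) * (2*h^2)
      = -(3*δ^2*c_e*t) - δ^2*c_e^2*i := by field_simp; ring
  rw [e1, e2]
  have H1 : 0 ≤ t*δ^2*(c_e*(1-c_e)) :=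
    mul_nonneg (mul_nonneg ht (sq_nonneg δ)) (mul_nonneg hce.le (by linarith))
  have H2 : 0 ≤ i*c_e*h*(h - 2*δ) :=
    mul_nonneg (mul_nonneg (mul_nonneg hi hce.le) hh.le) (by linarith)
  have H3 : 0 ≤ i*δ*c_e*μ0 :=
    mul_nonneg (mul_nonneg (mul_nonneg hi hδ.le) hce.le) hμ00
  nlinarith [H1, H2, H3]

lemma mha_arith3 {h δ c_e μ0 t : ℝ} (hh : 0 < h) (hδ : 0 < δ) (hδh : δ ≤ h / 2)
    (hce : 0 < c_e) (hce1 : c_e ≤ 1) (ht : 0 ≤ t) (hμ00 : 0 ≤ μ0) :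
    (2*δ*c_e/h^2) * (μ0*t - t*δ) + t * (-(2*δ*c_e/h^2)*μ0 + (2*δ*c_e/h^2)^2*h^2/8)
      ≤ -(3*δ^2*c_e*t)/(2*h^2) := by
  have h2 : (0:ℝ) < 2*h^2 := by positivity
  rw [← mul_le_mul_iff_of_pos_right h2]
  have e1 : ((2*δ*c_e/h^2) * (μ0*t - t*δ)
      + t * (-(2*δ*c_e/h^2)*μ0 + (2*δ*c_e/h^2)^2*h^2/8)) * (2*h^2)
      = t*δ^2*c_e*(c_e - 4) := by field_simp; ring
  have e2 : (-(3*δ^2*c_e*t)/(2*h^2)) * (2*h^2) = -(3*δ^2*c_e*t) := by field_simp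
  rw [e1, e2]
  have H1 : 0 ≤ t*δ^2*(c_e*(1-c_e)) :=
    mul_nonneg (mul_nonneg ht (sq_nonneg δ)) (mul_nonneg hce.le (by linarith))
  nlinarith [H1]

lemma mha_arith4 {h δ c_e μ0 t i : ℝ} (hh : 0 < h) (hδ : 0 < δ) (hδh : δ ≤ h / 2)
    (hce : 0 < c_e) (hce1 : c_e ≤ 1) (ht : 0 ≤ t) (hμ00 : 0 ≤ μ0) (hμ0h : μ0 ≤ h)
    (hit : i ≤ t) (hi : 0 ≤ i) :
    (2*δ*c_e/h^2) * (μ0*t - t*δ) + ((t - i) * (-(2*δ*c_e/h^2)*μ0 + (2*δ*c_e/h^2)^2*h^2/8)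
        + (0 * (i*h) + -c_e*i))
      ≤ -(3*δ^2*c_e*t)/(2*h^2) + -(δ^2*c_e^2/(2*h^2)) * i := by
  have h2 : (0:ℝ) < 2*h^2 := by positivity
  rw [← mul_le_mul_iff_of_pos_right h2]
  have e1 : ((2*δ*c_e/h^2) * (μ0*t - t*δ) + ((t - i) * (-(2*δ*c_e/h^2)*μ0
      + (2*δ*c_e/h^2)^2*h^2/8) + (0 * (i*h) + -c_e*i))) * (2*h^2)
      = 4*δ*c_e*μ0*i - 4*δ^2*c_e*t + t*δ^2*c_e^2 - i*δ^2*c_e^2 - 2*c_e*i*h^2 := by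
    field_simp; ring
  have e2 : (-(3*δ^2*c_e*t)/(2*h^2) + -(δ^2*c_e^2/(2*h^2)) * i) * (2*h^2)
      = -(3*δ^2*c_e*t) - δ^2*c_e^2*i := by field_simp; ring
  rw [e1, e2]
  have H1 : 0 ≤ t*δ^2*(c_e*(1-c_e)) :=
    mul_nonneg (mul_nonneg ht (sq_nonneg δ)) (mul_nonneg hce.le (by linarith))
  have H2 : 0 ≤ i*c_e*h*(h - 2*δ) :=
    mul_nonneg (mul_nonneg (mul_nonneg hi hce.le) hh.le) (by linarith)
  have H5 : 0 ≤ i*δ*c_e*(h - μ0) :=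
    mul_nonneg (mul_nonneg (mul_nonneg hi hδ.le) hce.le) (by linarith)
  nlinarith [H1, H2, H5]

/-- The σ-algebra generated by `X_1, …, X_t`. -/
def mhaF {Ω : Type*} (X : ℕ → Ω → ℝ) (t : ℕ) : MeasurableSpace Ω :=
  ⨆ j ∈ Finset.Icc 1 t, MeasurableSpace.comap (X j) (inferInstance : MeasurableSpace ℝ)

lemma mha_step {Ω : Type*} [m0 : MeasurableSpace Ω] (μ : Measure Ω) [IsProbabilityMeasure μ]
    (X : ℕ → Ω → ℝ) (h : ℝ) (hh : 0 < h) (μ0 : ℝ) (hμ00 : 0 ≤ μ0) (hμ0h : μ0 ≤ h)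
    (hmeas : ∀ i, Measurable (X i)) (habs : ∀ᵐ ω ∂μ, ∀ i, X i ω ∈ Set.Icc 0 h)
    (l : ℝ) (t : ℕ) (bp : ℝ) (hbp : 0 ≤ bp)
    (hbad : μ {ω | (μ[X (t+1) | mhaF X t]) ω ≠ μ0} ≤ ENNReal.ofReal bp) :
    ∫ ω, Real.exp (l * ∑ i ∈ Finset.Icc 1 (t+1), X i ω) ∂μ
      ≤ Real.exp (l * μ0 + l ^ 2 * h ^ 2 / 8)
          * ∫ ω, Real.exp (l * ∑ i ∈ Finset.Icc 1 t, X i ω) ∂μ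
        + Real.exp (max l 0 * ((t + 1) * h)) * bp := by
  have hF : mhaF X t ≤ m0 := by
    refine iSup_le fun j => iSup_le fun _ => ?_
    exact MeasurableSpace.comap_le_iff_le_map.2 ((hmeas j).le_map)
  haveI : SigmaFinite (μ.trim hF) := by infer_instance
  set S1 : Ω → ℝ := fun ω => ∑ i ∈ Finset.Icc 1 t, X i ω with hS1def
  have hsum : ∀ ω, ∑ i ∈ Finset.Icc 1 (t+1), X i ω = S1 ω + X (t+1) ω := by
    intro ω
    rw [Finset.sum_Icc_succ_top (by omega : 1 ≤ t + 1)]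
  have hSmeasF : Measurable[mhaF X t] S1 := by
    refine Finset.measurable_sum _ fun j hj => ?_
    have h1 : Measurable[MeasurableSpace.comap (X j)
        (inferInstance : MeasurableSpace ℝ)] (X j) := fun s hs => ⟨s, hs, rfl⟩
    exact h1.mono (le_iSup₂ (f := fun j (_ : j ∈ Finset.Icc 1 t) => MeasurableSpace.comap (X j) (inferInstance : MeasurableSpace ℝ)) j hj) le_rfl
  set κ : Ω → ℝ := μ[X (t+1) | mhaF X t] with hκdef
  set G : Set Ω := {ω | κ ω = μ0} with hGdef
  have hGF : MeasurableSet[mhaF X t] G := by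
    have : G = κ ⁻¹' {μ0} := rfl
    rw [this]
    exact stronglyMeasurable_condExp.measurable (measurableSet_singleton μ0)
  have hG : MeasurableSet G := hF _ hGF
  set c : ℝ := (Real.exp (l * h) - 1) / h with hcdef
  set A : ℝ := Real.exp (l * μ0 + l ^ 2 * h ^ 2 / 8) with hAdef
  -- pointwise convexity bound
  have hpoint : ∀ x ∈ Set.Icc (0:ℝ) h, Real.exp (l * x) ≤ 1 + x * c := by
    rintro x ⟨hx0, hxh⟩
    have ha : (0:ℝ) ≤ 1 - x / h := by
      rw [sub_nonneg, div_le_one hh]; exact hxh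
    have hb : (0:ℝ) ≤ x / h := div_nonneg hx0 hh.le
    have hab : (1 - x / h) + x / h = 1 := by ring
    have hcvx := convexOn_exp.2 (Set.mem_univ (0:ℝ)) (Set.mem_univ (l * h)) ha hb hab
    have heq : (1 - x / h) • (0:ℝ) + (x / h) • (l * h) = l * x := by
      rw [smul_eq_mul, smul_eq_mul]
      field_simp
      ring
    rw [heq] at hcvx
    have : (1 - x / h) • Real.exp 0 + (x / h) • Real.exp (l * h) = 1 + x * c := by
      rw [Real.exp_zero, smul_eq_mul, smul_eq_mul, hcdef]
      field_simp
      ring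
    linarith [hcvx, this.le, this.ge]
  -- Hoeffding bound for the on-event conditional factor
  have hAbound : 1 + μ0 * c ≤ A := by
    have hp0 : (0:ℝ) ≤ μ0 / h := div_nonneg hμ00 hh.le
    have hp1 : μ0 / h ≤ 1 := by rw [div_le_one hh]; exact hμ0h
    have := hoeffding_core hp0 hp1 (l * h)
    have he1 : (1 - μ0 / h) + (μ0 / h) * Real.exp (l * h) = 1 + μ0 * c := by
      rw [hcdef]; field_simp; ring
    have he2 : (μ0 / h) * (l * h) + (l * h) ^ 2 / 8 = l * μ0 + l ^ 2 * h ^ 2 / 8 := by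
      field_simp
    rw [he1, he2] at this
    exact this
  -- integrability facts
  have hXint : ∀ i, Integrable (X i) μ := by
    intro i
    refine integrable_of_ae_bound (hmeas i).aestronglyMeasurable (C := h) ?_
    filter_upwards [habs] with ω hω
    rcases hω i with ⟨h0, h1⟩
    rw [abs_le]; constructor <;> linarith
  set g1 : Ω → ℝ := fun ω => Real.exp (l * X (t+1) ω) with hg1def
  have hg1meas : Measurable g1 := measurable_exp.comp ((hmeas (t+1)).const_mul l)
  have hg1int : Integrable g1 μ := by
    refine integrable_of_ae_bound hg1meas.aestronglyMeasurable (C := Real.exp (|l| * h)) ?_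
    filter_upwards [habs] with ω hω
    rcases hω (t+1) with ⟨h0, h1⟩
    rw [abs_of_pos (exp_pos _)]
    apply Real.exp_le_exp.2
    calc l * X (t+1) ω ≤ |l * X (t+1) ω| := le_abs_self _
      _ ≤ |l| * h := by rw [abs_mul]; exact mul_le_mul_of_nonneg_left (by rw [abs_le]; constructor <;> linarith) (abs_nonneg l)
  have hS1bound : ∀ᵐ ω ∂μ, S1 ω ∈ Set.Icc 0 (t * h) := by
    filter_upwards [habs] with ω hω
    constructor
    · exact Finset.sum_nonneg fun i _ => (hω i).1
    · calc S1 ω ≤ ∑ i ∈ Finset.Icc 1 t, h := Finset.sum_le_sum fun i _ => (hω i).2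
        _ = t * h := by rw [Finset.sum_const, Nat.card_Icc]; simp
  have hexpS1meas : Measurable (fun ω => Real.exp (l * S1 ω)) :=
    measurable_exp.comp ((Finset.measurable_sum _ fun j _ => hmeas j).const_mul l)
  have hexpS1int : Integrable (fun ω => Real.exp (l * S1 ω)) μ := by
    refine integrable_of_ae_bound hexpS1meas.aestronglyMeasurable
      (C := Real.exp (|l| * (t * h))) ?_
    filter_upwards [hS1bound] with ω hω
    rw [abs_of_pos (exp_pos _)]
    apply Real.exp_le_exp.2
    calc l * S1 ω ≤ |l * S1 ω| := le_abs_self _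
      _ ≤ |l| * (t * h) := by
          rw [abs_mul]
          refine mul_le_mul_of_nonneg_left ?_ (abs_nonneg l)
          rw [abs_le]; exact ⟨by linarith [hω.1, hω.2], hω.2⟩
  set K : ℝ := Real.exp (max l 0 * ((t + 1) * h)) with hKdef
  have hSt1bound : ∀ᵐ ω ∂μ, Real.exp (l * (S1 ω + X (t+1) ω)) ≤ K := by
    filter_upwards [hS1bound, habs] with ω h1 h2
    apply Real.exp_le_exp.2
    have hs0 : 0 ≤ S1 ω + X (t+1) ω := by linarith [h1.1, (h2 (t+1)).1]
    have hs1 : S1 ω + X (t+1) ω ≤ (t+1) * h := by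
      have := (h2 (t+1)).2; push_cast; linarith [h1.2]
    rcases le_total l 0 with hl | hl
    · have : l * (S1 ω + X (t+1) ω) ≤ 0 := mul_nonpos_of_nonpos_of_nonneg hl hs0
      have h0 : (0:ℝ) ≤ max l 0 * ((t+1) * h) :=
        mul_nonneg (le_max_right l 0) (by positivity)
      linarith
    · rw [max_eq_left hl]
      exact mul_le_mul_of_nonneg_left hs1 hl
  have hexpSt1meas : Measurable (fun ω => Real.exp (l * (S1 ω + X (t+1) ω))) :=
    measurable_exp.comp (((Finset.measurable_sum _ fun j _ => hmeas j).add (hmeas (t+1))).const_mul l)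
  have hexpSt1int : Integrable (fun ω => Real.exp (l * (S1 ω + X (t+1) ω))) μ := by
    refine integrable_of_ae_bound hexpSt1meas.aestronglyMeasurable (C := K) ?_
    filter_upwards [hSt1bound] with ω hω
    rw [abs_of_pos (exp_pos _)]; exact hω
  set f1 : Ω → ℝ := G.indicator (fun ω => Real.exp (l * S1 ω)) with hf1def
  have hf1measF : StronglyMeasurable[mhaF X t] f1 :=
    ((measurable_exp.comp (hSmeasF.const_mul l)).stronglyMeasurable).indicator hGF
  have hf1int : Integrable f1 μ := hexpS1int.indicator hG
  have hprod : f1 * g1 = G.indicator (fun ω => Real.exp (l * (S1 ω + X (t+1) ω))) := by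
    funext ω
    by_cases hω : ω ∈ G
    · simp only [Pi.mul_apply, hf1def, Set.indicator_of_mem hω, hg1def, mul_add,
        Real.exp_add]
    · simp [hf1def, Set.indicator_of_notMem hω]
  have hfgint : Integrable (f1 * g1) μ := by
    rw [hprod]; exact hexpSt1int.indicator hG
  -- conditional expectation bound
  have haffint : Integrable (fun ω => 1 + X (t+1) ω * c) μ :=
    (integrable_const 1).add ((hXint (t+1)).mul_const c)
  have hcond_le : μ[g1|mhaF X t] ≤ᵐ[μ] fun ω => 1 + κ ω * c := by
    have h1 : g1 ≤ᵐ[μ] fun ω => 1 + X (t+1) ω * c := by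
      filter_upwards [habs] with ω hω
      exact hpoint _ (hω (t+1))
    have h2 := condExp_mono (m := mhaF X t) hg1int haffint h1
    have h3 : μ[(fun ω => 1 + X (t+1) ω * c)|mhaF X t] =ᵐ[μ] fun ω => 1 + κ ω * c := by
      have heq : (fun ω => 1 + X (t+1) ω * c) = (fun _ => (1:ℝ)) + c • (X (t+1)) := by
        funext ω; simp [mul_comm]
      rw [heq]
      refine (condExp_add (integrable_const 1) ((hXint (t+1)).smul c) _).trans ?_
      have h4 := condExp_const hF (1:ℝ) (μ := μ)
      have h5 := condExp_smul (μ := μ) (m := mhaF X t) c (X (t+1))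
      filter_upwards [h5] with ω h5ω
      have h4ω : (μ[(fun _ => (1:ℝ))|mhaF X t]) = fun _ => (1:ℝ) := h4
      simp only [Pi.add_apply, h4ω, h5ω, Pi.smul_apply, smul_eq_mul, hκdef]
      ring
    filter_upwards [h2, h3] with ω hω2 hω3
    rw [← hω3]; exact hω2
  have hmain_ae : f1 * μ[g1|mhaF X t] ≤ᵐ[μ] fun ω => A * f1 ω := by
    filter_upwards [hcond_le] with ω hω
    by_cases hωG : ω ∈ G
    · have hf1ω : f1 ω = Real.exp (l * S1 ω) := Set.indicator_of_mem hωG _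
      have hκω : κ ω = μ0 := hωG
      have hle : (μ[g1|mhaF X t]) ω ≤ A := by
        calc (μ[g1|mhaF X t]) ω ≤ 1 + κ ω * c := hω
          _ = 1 + μ0 * c := by rw [hκω]
          _ ≤ A := hAbound
      simp only [Pi.mul_apply]
      calc f1 ω * (μ[g1|mhaF X t]) ω ≤ f1 ω * A := by
            refine mul_le_mul_of_nonneg_left hle ?_
            rw [hf1ω]; exact (exp_pos _).le
        _ = A * f1 ω := mul_comm _ _
    · have hf1ω : f1 ω = 0 := Set.indicator_of_notMem hωG _
      simp [hf1ω]
  have hcondint : Integrable (f1 * μ[g1|mhaF X t]) μ :=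
    (integrable_condExp (m := mhaF X t)).congr (condExp_mul_of_stronglyMeasurable_left hf1measF hfgint hg1int)
  have hgood : ∫ ω, (f1 * g1) ω ∂μ ≤ A * ∫ ω, Real.exp (l * S1 ω) ∂μ := by
    calc ∫ ω, (f1 * g1) ω ∂μ = ∫ ω, (μ[f1 * g1|mhaF X t]) ω ∂μ := (integral_condExp hF).symm
      _ = ∫ ω, (f1 * μ[g1|mhaF X t]) ω ∂μ :=
          integral_congr_ae (condExp_mul_of_stronglyMeasurable_left hf1measF hfgint hg1int)
      _ ≤ ∫ ω, A * f1 ω ∂μ := integral_mono_ae hcondint (hf1int.const_mul A) hmain_ae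
      _ = A * ∫ ω, f1 ω ∂μ := integral_const_mul A _
      _ ≤ A * ∫ ω, Real.exp (l * S1 ω) ∂μ := by
          refine mul_le_mul_of_nonneg_left ?_ (exp_pos _).le
          refine integral_mono hf1int hexpS1int ?_
          exact Set.indicator_le_self' fun ω _ => (exp_pos _).le
  -- bad part
  have hbadset : μ Gᶜ ≤ ENNReal.ofReal bp := by
    have : Gᶜ = {ω | (μ[X (t+1) | mhaF X t]) ω ≠ μ0} := by
      rw [hGdef]; ext ω; simp [hκdef]
    rw [this]; exact hbad
  have hbadtoReal : (μ Gᶜ).toReal ≤ bp := ENNReal.toReal_le_of_le_ofReal hbp hbadset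
  set f2 : Ω → ℝ := Gᶜ.indicator (fun ω => Real.exp (l * (S1 ω + X (t+1) ω))) with hf2def
  have hf2int : Integrable f2 μ := hexpSt1int.indicator hG.compl
  have hbadbound : ∫ ω, f2 ω ∂μ ≤ K * bp := by
    have h1 : f2 ≤ᵐ[μ] Gᶜ.indicator (fun _ => K) := by
      filter_upwards [hSt1bound] with ω hω
      by_cases hωG : ω ∈ Gᶜ
      · rw [hf2def]
        rw [Set.indicator_of_mem hωG, Set.indicator_of_mem hωG]
        exact hω
      · rw [hf2def, Set.indicator_of_notMem hωG, Set.indicator_of_notMem hωG]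
    calc ∫ ω, f2 ω ∂μ ≤ ∫ ω, Gᶜ.indicator (fun _ => K) ω ∂μ :=
          integral_mono_ae hf2int ((integrable_const K).indicator hG.compl) h1
      _ = (μ Gᶜ).toReal • K := integral_indicator_const K hG.compl
      _ ≤ bp * K := by
          rw [smul_eq_mul]
          exact mul_le_mul_of_nonneg_right hbadtoReal (exp_pos _).le
      _ = K * bp := mul_comm _ _
  -- combine
  have hsplit : ∫ ω, Real.exp (l * (S1 ω + X (t+1) ω)) ∂μ
      = ∫ ω, (f1 * g1) ω ∂μ + ∫ ω, f2 ω ∂μ := by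
    have hptw : ∀ ω, Real.exp (l * (S1 ω + X (t+1) ω)) = (f1 * g1) ω + f2 ω := by
      intro ω
      have h1 : (f1 * g1) ω
          = G.indicator (fun ω => Real.exp (l * (S1 ω + X (t+1) ω))) ω := by rw [hprod]
      rw [h1, hf2def]
      by_cases hωG : ω ∈ G
      · rw [Set.indicator_of_mem hωG, Set.indicator_of_notMem (by simpa using hωG), add_zero]
      · rw [Set.indicator_of_notMem hωG, Set.indicator_of_mem (by simpa using hωG), zero_add]
    rw [← integral_add hfgint hf2int]
    exact integral_congr_ae (Eventually.of_forall fun ω => by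
      show Real.exp (l * (S1 ω + X (t+1) ω)) = (f1 * g1) ω + f2 ω
      exact hptw ω)
  calc ∫ ω, Real.exp (l * ∑ i ∈ Finset.Icc 1 (t+1), X i ω) ∂μ
      = ∫ ω, Real.exp (l * (S1 ω + X (t+1) ω)) ∂μ := by
        refine integral_congr_ae (Eventually.of_forall fun ω => ?_)
        show Real.exp (l * ∑ i ∈ Finset.Icc 1 (t+1), X i ω)
            = Real.exp (l * (S1 ω + X (t+1) ω))
        rw [hsum ω]
    _ = ∫ ω, (f1 * g1) ω ∂μ + ∫ ω, f2 ω ∂μ := hsplit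
    _ ≤ A * ∫ ω, Real.exp (l * S1 ω) ∂μ + K * bp := add_le_add hgood hbadbound

set_option maxHeartbeats 1000000 in
/-- Modified Hoeffding-Azuma inequality: for a sequence `{X_i}` of `[0,h]`-valued random
variables with means tending to `μ0`, such that the conditional mean of `X_i` given
`X_1,…,X_{i-1}` differs from `μ0` only with probability at most `c_p·exp(-c_e·i)`, the partial
sums concentrate around `μ0·t` at an exponential rate. -/
theorem modified_hoeffding_azuma {Ω : Type*} [m0 : MeasurableSpace Ω]
    (μ : Measure Ω) [IsProbabilityMeasure μ]
    (X : ℕ → Ω → ℝ) (h : ℝ) (hh : 0 < h)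
    (μs : ℕ → ℝ) (μ0 c_p c_e : ℝ)
    (hmeas : ∀ i, Measurable (X i))
    (hbound : ∀ i, ∀ᵐ ω ∂μ, X i ω ∈ Set.Icc 0 h)
    (hmean : ∀ i, μs i = ∫ ω, X i ω ∂μ)
    (hlim : Tendsto μs atTop (nhds μ0))
    (hcp : 0 < c_p) (hce : 0 < c_e) (hce1 : c_e ≤ 1)
    (hcond : ∀ i : ℕ, 1 ≤ i →
        μ {ω | (μ[X i | ⨆ j ∈ Finset.Icc 1 (i - 1),
              MeasurableSpace.comap (X j) (inferInstance : MeasurableSpace ℝ)]) ω ≠ μ0}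
          ≤ ENNReal.ofReal (c_p * Real.exp (-c_e * i)))
    (δ : ℝ) (hδ : 0 < δ) (hδh : δ ≤ h / 2) (t : ℕ) :
    μ {ω | μ0 * t + t * δ ≤ ∑ i ∈ Finset.Icc 1 t, X i ω}
        ≤ ENNReal.ofReal ((1 + 2 * c_p * h ^ 2 / (δ ^ 2 * c_e ^ 2))
            * Real.exp (-(3 * δ ^ 2 * c_e * t) / (2 * h ^ 2)))
      ∧ μ {ω | ∑ i ∈ Finset.Icc 1 t, X i ω ≤ μ0 * t - t * δ}
        ≤ ENNReal.ofReal ((1 + 2 * c_p * h ^ 2 / (δ ^ 2 * c_e ^ 2))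
            * Real.exp (-(3 * δ ^ 2 * c_e * t) / (2 * h ^ 2))) := by
  have habs : ∀ᵐ ω ∂μ, ∀ i, X i ω ∈ Set.Icc 0 h := (ae_all_iff).2 hbound
  have hXint : ∀ i, Integrable (X i) μ := by
    intro i
    refine integrable_of_ae_bound (hmeas i).aestronglyMeasurable (C := h) ?_
    filter_upwards [hbound i] with ω hω
    rcases hω with ⟨h0, h1⟩; rw [abs_le]; constructor <;> linarith
  have hμsmem : ∀ i, μs i ∈ Set.Icc 0 h := by
    intro i
    rw [hmean i]
    constructor
    · exact integral_nonneg_of_ae (by filter_upwards [hbound i] with ω hω using hω.1)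
    · calc ∫ ω, X i ω ∂μ ≤ ∫ _, h ∂μ :=
            integral_mono_ae (hXint i) (integrable_const h)
              (by filter_upwards [hbound i] with ω hω using hω.2)
        _ = h := by simp
  have hμ00 : 0 ≤ μ0 := ge_of_tendsto' hlim fun i => (hμsmem i).1
  have hμ0h : μ0 ≤ h := le_of_tendsto' hlim fun i => (hμsmem i).2
  have hSbound : ∀ s : ℕ, ∀ᵐ ω ∂μ, (∑ i ∈ Finset.Icc 1 s, X i ω) ∈ Set.Icc 0 (s * h) := by
    intro s
    filter_upwards [habs] with ω hω
    constructor
    · exact Finset.sum_nonneg fun i _ => (hω i).1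
    · calc ∑ i ∈ Finset.Icc 1 s, X i ω ≤ ∑ i ∈ Finset.Icc 1 s, h :=
            Finset.sum_le_sum fun i _ => (hω i).2
        _ = s * h := by rw [Finset.sum_const, Nat.card_Icc]; simp
  have hSmeas : ∀ s : ℕ, Measurable (fun ω => ∑ i ∈ Finset.Icc 1 s, X i ω) :=
    fun s => Finset.measurable_sum _ fun j _ => hmeas j
  have hSint : ∀ (l : ℝ) (s : ℕ),
      Integrable (fun ω => Real.exp (l * ∑ i ∈ Finset.Icc 1 s, X i ω)) μ := by
    intro l s
    refine integrable_of_ae_bound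
      (measurable_exp.comp ((hSmeas s).const_mul l)).aestronglyMeasurable
      (C := Real.exp (|l| * (s * h))) ?_
    filter_upwards [hSbound s] with ω hω
    rw [abs_of_pos (exp_pos _)]
    apply Real.exp_le_exp.2
    calc l * (∑ i ∈ Finset.Icc 1 s, X i ω) ≤ |l * ∑ i ∈ Finset.Icc 1 s, X i ω| :=
          le_abs_self _
      _ ≤ |l| * (s * h) := by
          rw [abs_mul]
          refine mul_le_mul_of_nonneg_left ?_ (abs_nonneg l)
          rw [abs_le]; exact ⟨by linarith [hω.1, hω.2], hω.2⟩
  -- MGF recursion bound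
  have hM : ∀ (l : ℝ) (s : ℕ),
      ∫ ω, Real.exp (l * ∑ i ∈ Finset.Icc 1 s, X i ω) ∂μ
        ≤ Real.exp (l * μ0 + l ^ 2 * h ^ 2 / 8) ^ s
          + ∑ i ∈ Finset.Icc 1 s, Real.exp (l * μ0 + l ^ 2 * h ^ 2 / 8) ^ (s - i)
              * (Real.exp (max l 0 * (i * h)) * (c_p * Real.exp (-c_e * i))) := by
    intro l s
    set A : ℝ := Real.exp (l * μ0 + l ^ 2 * h ^ 2 / 8) with hAdef
    set b : ℕ → ℝ := fun i => Real.exp (max l 0 * (i * h)) * (c_p * Real.exp (-c_e * i))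
      with hbdef
    induction s with
    | zero =>
      have he : (Finset.Icc 1 0 : Finset ℕ) = ∅ := by decide
      simp [he]
    | succ n ih =>
      have hbad := hcond (n+1) (by omega)
      have hn : (n + 1) - 1 = n := by omega
      rw [hn] at hbad
      have hstep := mha_step μ X h hh μ0 hμ00 hμ0h hmeas habs l n
        (c_p * Real.exp (-c_e * (n+1 : ℕ))) (by positivity) hbad
      have hA0 : (0:ℝ) < A := exp_pos _
      calc ∫ ω, Real.exp (l * ∑ i ∈ Finset.Icc 1 (n+1), X i ω) ∂μ
          ≤ A * ∫ ω, Real.exp (l * ∑ i ∈ Finset.Icc 1 n, X i ω) ∂μ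
              + Real.exp (max l 0 * ((n + 1) * h)) * (c_p * Real.exp (-c_e * (n+1 : ℕ))) :=
            hstep
        _ ≤ A * (A ^ n + ∑ i ∈ Finset.Icc 1 n, A ^ (n - i) * b i) + b (n+1) := by
            have hb1 : Real.exp (max l 0 * ((n + 1) * h)) * (c_p * Real.exp (-c_e * (n+1 : ℕ)))
                = b (n+1) := by
              rw [hbdef]
              push_cast
              ring_nf
            rw [hb1]
            exact add_le_add_left (mul_le_mul_of_nonneg_left ih hA0.le) _
        _ = A ^ (n+1) + ∑ i ∈ Finset.Icc 1 (n+1), A ^ (n + 1 - i) * b i := by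
            have hsum2 : ∑ i ∈ Finset.Icc 1 (n+1), A ^ (n + 1 - i) * b i
                = (∑ i ∈ Finset.Icc 1 n, A ^ (n + 1 - i) * b i) + b (n+1) := by
              rw [Finset.sum_Icc_succ_top (by omega : 1 ≤ n + 1), Nat.sub_self, pow_zero,
                one_mul]
            have hsum3 : ∑ i ∈ Finset.Icc 1 n, A ^ (n + 1 - i) * b i
                = ∑ i ∈ Finset.Icc 1 n, A * (A ^ (n - i) * b i) := by
              refine Finset.sum_congr rfl fun i hi => ?_
              rcases Finset.mem_Icc.1 hi with ⟨_, hile⟩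
              have hni : n + 1 - i = (n - i) + 1 := by omega
              rw [hni, pow_succ]; ring
            rw [hsum2, hsum3, ← Finset.mul_sum, mul_add, pow_succ]
            ring
  -- constants
  set q : ℝ := δ^2*c_e^2/(2*h^2) with hqdef
  have hq : 0 < q := by positivity
  set E : ℝ := Real.exp (-(3 * δ ^ 2 * c_e * t) / (2 * h ^ 2)) with hEdef
  have hE : 0 < E := exp_pos _
  set C : ℝ := 2 * c_p * h ^ 2 / (δ ^ 2 * c_e ^ 2) with hCdef
  have hC : 0 < C := by positivity
  have hCq : c_p * (1/q) = C := by rw [hqdef, hCdef]; field_simp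
  set lam : ℝ := 2*δ*c_e/h^2 with hlamdef
  have hlam : 0 < lam := by rw [hlamdef]; positivity
  have htR : (0:ℝ) ≤ (t:ℝ) := Nat.cast_nonneg t
  have hRHS0 : (0:ℝ) ≤ (1 + C) * E := mul_nonneg (by linarith) hE.le
  constructor
  · -- upper tail
    have h1 := ProbabilityTheory.measure_ge_le_exp_mul_mgf (μ := μ)
      (X := fun ω => ∑ i ∈ Finset.Icc 1 t, X i ω) (μ0 * t + t * δ) hlam.le (hSint lam t)
    have h2 : ProbabilityTheory.mgf (fun ω => ∑ i ∈ Finset.Icc 1 t, X i ω) μ lam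
        = ∫ ω, Real.exp (lam * ∑ i ∈ Finset.Icc 1 t, X i ω) ∂μ := rfl
    rw [h2] at h1
    rw [ENNReal.le_ofReal_iff_toReal_le (measure_ne_top μ _) hRHS0]
    refine h1.trans ?_
    set A : ℝ := Real.exp (lam * μ0 + lam ^ 2 * h ^ 2 / 8) with hAdef
    calc Real.exp (-lam * (μ0 * t + t * δ))
          * ∫ ω, Real.exp (lam * ∑ i ∈ Finset.Icc 1 t, X i ω) ∂μ
        ≤ Real.exp (-lam * (μ0 * t + t * δ)) * (A ^ t
            + ∑ i ∈ Finset.Icc 1 t, A ^ (t - i)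
              * (Real.exp (max lam 0 * (i * h)) * (c_p * Real.exp (-c_e * i)))) :=
          mul_le_mul_of_nonneg_left (hM lam t) (exp_pos _).le
      _ = Real.exp (-lam * (μ0 * t + t * δ)) * A ^ t
            + ∑ i ∈ Finset.Icc 1 t, Real.exp (-lam * (μ0 * t + t * δ)) * (A ^ (t - i)
              * (Real.exp (max lam 0 * (i * h)) * (c_p * Real.exp (-c_e * i)))) := by
          rw [mul_add, Finset.mul_sum]
      _ ≤ E + ∑ i ∈ Finset.Icc 1 t, c_p * (E * Real.exp (-q * i)) := by
          refine add_le_add ?_ (Finset.sum_le_sum fun i hi => ?_)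
          · rw [hAdef, ← Real.exp_nat_mul, ← Real.exp_add, hEdef]
            apply Real.exp_le_exp.2
            have h4 := mha_arith1 (μ0 := μ0) (t := (t:ℝ)) hh hδ hδh hce hce1 htR hμ00
            rw [hlamdef]
            linarith [h4]
          · rcases Finset.mem_Icc.1 hi with ⟨hi1, hi2⟩
            have hiR : ((i:ℝ)) ≤ (t:ℝ) := Nat.cast_le.2 hi2
            have hi0 : (0:ℝ) ≤ (i:ℝ) := Nat.cast_nonneg i
            have hcast : ((t - i : ℕ) : ℝ) = (t:ℝ) - (i:ℝ) := Nat.cast_sub hi2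
            have e1 : A ^ (t - i)
                = Real.exp (((t:ℝ) - i) * (lam * μ0 + lam ^ 2 * h ^ 2 / 8)) := by
              rw [hAdef, ← Real.exp_nat_mul, hcast]
            rw [max_eq_left hlam.le, e1]
            have e2 : Real.exp (-lam * (μ0 * t + t * δ))
                * (Real.exp (((t:ℝ) - i) * (lam * μ0 + lam ^ 2 * h ^ 2 / 8))
                  * (Real.exp (lam * (i * h)) * (c_p * Real.exp (-c_e * i))))
                = c_p * Real.exp (-lam * (μ0 * t + t * δ)
                    + (((t:ℝ) - i) * (lam * μ0 + lam ^ 2 * h ^ 2 / 8)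
                      + (lam * (i * h) + -c_e * i))) := by
              rw [Real.exp_add, Real.exp_add, Real.exp_add]; ring
            rw [e2]
            have e3 : E * Real.exp (-q * i)
                = Real.exp (-(3 * δ ^ 2 * c_e * t) / (2 * h ^ 2) + -q * i) := by
              rw [hEdef, Real.exp_add]
            rw [e3]
            refine mul_le_mul_of_nonneg_left (Real.exp_le_exp.2 ?_) hcp.le
            have h4 := mha_arith2 (μ0 := μ0) (t := (t:ℝ)) (i := (i:ℝ)) hh hδ hδh hce hce1
              htR hμ00 hμ0h hiR hi0
            rw [hlamdef, hqdef]
            linarith [h4]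
      _ ≤ E + C * E := by
          have hsum : ∑ i ∈ Finset.Icc 1 t, c_p * (E * Real.exp (-q * i))
              = c_p * E * ∑ i ∈ Finset.Icc 1 t, Real.exp (-q * i) := by
            rw [Finset.mul_sum]; exact Finset.sum_congr rfl fun i _ => by ring
          rw [hsum]
          refine add_le_add_right ?_ E
          calc c_p * E * ∑ i ∈ Finset.Icc 1 t, Real.exp (-q * i)
              ≤ c_p * E * (1/q) :=
                mul_le_mul_of_nonneg_left (geom_tail hq t) (by positivity)
            _ = C * E := by rw [← hCq]; ring
      _ = (1 + C) * E := by ring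
  · -- lower tail
    have hmlam : (-lam) ≤ (0:ℝ) := neg_nonpos.2 hlam.le
    have h1 := ProbabilityTheory.measure_le_le_exp_mul_mgf (μ := μ)
      (X := fun ω => ∑ i ∈ Finset.Icc 1 t, X i ω) (μ0 * t - t * δ) hmlam (hSint (-lam) t)
    have h2 : ProbabilityTheory.mgf (fun ω => ∑ i ∈ Finset.Icc 1 t, X i ω) μ (-lam)
        = ∫ ω, Real.exp ((-lam) * ∑ i ∈ Finset.Icc 1 t, X i ω) ∂μ := rfl
    rw [h2] at h1
    rw [ENNReal.le_ofReal_iff_toReal_le (measure_ne_top μ _) hRHS0]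
    refine h1.trans ?_
    set A : ℝ := Real.exp ((-lam) * μ0 + (-lam) ^ 2 * h ^ 2 / 8) with hAdef
    have hmax : max (-lam) 0 = (0:ℝ) := max_eq_right hmlam
    calc Real.exp (-(-lam) * (μ0 * t - t * δ))
          * ∫ ω, Real.exp ((-lam) * ∑ i ∈ Finset.Icc 1 t, X i ω) ∂μ
        ≤ Real.exp (-(-lam) * (μ0 * t - t * δ)) * (A ^ t
            + ∑ i ∈ Finset.Icc 1 t, A ^ (t - i)
              * (Real.exp (max (-lam) 0 * (i * h)) * (c_p * Real.exp (-c_e * i)))) :=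
          mul_le_mul_of_nonneg_left (hM (-lam) t) (exp_pos _).le
      _ = Real.exp (-(-lam) * (μ0 * t - t * δ)) * A ^ t
            + ∑ i ∈ Finset.Icc 1 t, Real.exp (-(-lam) * (μ0 * t - t * δ)) * (A ^ (t - i)
              * (Real.exp (max (-lam) 0 * (i * h)) * (c_p * Real.exp (-c_e * i)))) := by
          rw [mul_add, Finset.mul_sum]
      _ ≤ E + ∑ i ∈ Finset.Icc 1 t, c_p * (E * Real.exp (-q * i)) := by
          refine add_le_add ?_ (Finset.sum_le_sum fun i hi => ?_)
          · rw [hAdef, ← Real.exp_nat_mul, ← Real.exp_add, hEdef]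
            apply Real.exp_le_exp.2
            have h4 := mha_arith3 (μ0 := μ0) (t := (t:ℝ)) hh hδ hδh hce hce1 htR hμ00
            rw [hlamdef]
            linarith [h4]
          · rcases Finset.mem_Icc.1 hi with ⟨hi1, hi2⟩
            have hiR : ((i:ℝ)) ≤ (t:ℝ) := Nat.cast_le.2 hi2
            have hi0 : (0:ℝ) ≤ (i:ℝ) := Nat.cast_nonneg i
            have hcast : ((t - i : ℕ) : ℝ) = (t:ℝ) - (i:ℝ) := Nat.cast_sub hi2
            have e1 : A ^ (t - i)
                = Real.exp (((t:ℝ) - i) * ((-lam) * μ0 + (-lam) ^ 2 * h ^ 2 / 8)) := by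
              rw [hAdef, ← Real.exp_nat_mul, hcast]
            rw [hmax, e1]
            have e2 : Real.exp (-(-lam) * (μ0 * t - t * δ))
                * (Real.exp (((t:ℝ) - i) * ((-lam) * μ0 + (-lam) ^ 2 * h ^ 2 / 8))
                  * (Real.exp ((0:ℝ) * (i * h)) * (c_p * Real.exp (-c_e * i))))
                = c_p * Real.exp (-(-lam) * (μ0 * t - t * δ)
                    + (((t:ℝ) - i) * ((-lam) * μ0 + (-lam) ^ 2 * h ^ 2 / 8)
                      + ((0:ℝ) * (i * h) + -c_e * i))) := by
              rw [Real.exp_add, Real.exp_add, Real.exp_add]; ring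
            rw [e2]
            have e3 : E * Real.exp (-q * i)
                = Real.exp (-(3 * δ ^ 2 * c_e * t) / (2 * h ^ 2) + -q * i) := by
              rw [hEdef, Real.exp_add]
            rw [e3]
            refine mul_le_mul_of_nonneg_left (Real.exp_le_exp.2 ?_) hcp.le
            have h4 := mha_arith4 (μ0 := μ0) (t := (t:ℝ)) (i := (i:ℝ)) hh hδ hδh hce hce1
              htR hμ00 hμ0h hiR hi0
            rw [hlamdef, hqdef]
            linarith [h4]
      _ ≤ E + C * E := by
          have hsum : ∑ i ∈ Finset.Icc 1 t, c_p * (E * Real.exp (-q * i))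
              = c_p * E * ∑ i ∈ Finset.Icc 1 t, Real.exp (-q * i) := by
            rw [Finset.mul_sum]; exact Finset.sum_congr rfl fun i _ => by ring
          rw [hsum]
          refine add_le_add_right ?_ E
          calc c_p * E * ∑ i ∈ Finset.Icc 1 t, Real.exp (-q * i)
              ≤ c_p * E * (1/q) :=
                mul_le_mul_of_nonneg_left (geom_tail hq t) (by positivity)
            _ = C * E := by rw [← hCq]; ring
      _ = (1 + C) * E := by ring
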